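/- Let G ⊆ ℝⁿ be a bounded domain, (b^{jk}) a symmetric C³ matrix field on closure(G), T > 0, and let ψ ∈ C⁴(closure(G)) be positive and satisfy Condition (B)(i) with constant μ₀ > 0 together with: (1/4) Σ_{j,k} b^{jk}ψ_{x_j}ψ_{x_k} ≥ R₁² on closure(G), where R₁² := max_{closure(G)} ψ; c₁ < R₁/(√2 T); and μ₀ − 4c₁ − c₀ > 0, for some constants c₀, c₁ > 0. For λ > 0 define ℓ(t,x) = λ(ψ(x) − c₁t²), Ψ = ℓ_{tt} + Σ(b^{jk}ℓ_{x_j})_{x_k} − c₀λ, 𝒜 = ℓ_t² − ℓ_{tt} − Σ(b^{jk}ℓ_{x_j}ℓ_{x_k} − b^{jk}_{x_k}ℓ_{x_j} − b^{jk}ℓ_{x_jx_k}) − Ψ, and ℬ = 𝒜Ψ + ∂_t(𝒜ℓ_t) − Σ_{j,k} ∂_{x_k}(𝒜 b^{jk} ℓ_{x_j}) + (1/2)[∂_{tt}Ψ − Σ_{j,k} ∂_{x_k}(b^{jk} Ψ_{x_j})]. Then there exist constants C > 0 and λ₁ > 0 such that for all λ ≥ λ₁, t ∈ [0,T], and x ∈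 closure(G): ℬ(t,x) ≥ Cλ³. -/

import Mathlib

open scoped BigOperators

/-- The partial derivative `∂f/∂x_j` at `x`. -/
noncomputable def partialDeriv8 {n : ℕ} (f : EuclideanSpace ℝ (Fin n) → ℝ) (j : Fin n)
    (x : EuclideanSpace ℝ (Fin n)) : ℝ :=
  fderiv ℝ f x (EuclideanSpace.single j 1)

/-- The Carleman weight exponent `ℓ(t,x) = λ(ψ(x) − c₁ t²)`. -/
noncomputable def ell8 {n : ℕ} (lam c₁ : ℝ) (ψ : EuclideanSpace ℝ (Fin n) → ℝ)
    (t : ℝ) (x : EuclideanSpace ℝ (Fin n)) : ℝ :=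
  lam * (ψ x - c₁ * t ^ 2)

/-- `ℓ_t(t,x)`. -/
noncomputable def ellt8 {n : ℕ} (lam c₁ : ℝ) (ψ : EuclideanSpace ℝ (Fin n) → ℝ)
    (t : ℝ) (x : EuclideanSpace ℝ (Fin n)) : ℝ :=
  deriv (fun s => ell8 lam c₁ ψ s x) t

/-- `ℓ_{tt}(t,x)`. -/
noncomputable def elltt8 {n : ℕ} (lam c₁ : ℝ) (ψ : EuclideanSpace ℝ (Fin n) → ℝ)
    (t : ℝ) (x : EuclideanSpace ℝ (Fin n)) : ℝ :=
  deriv (fun s => ellt8 lam c₁ ψ s x) t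

/-- `Ψ = ℓ_{tt} + Σ_{j,k} (b^{jk} ℓ_{x_j})_{x_k} − c₀ λ`. -/
noncomputable def Psi8 {n : ℕ} (b : EuclideanSpace ℝ (Fin n) → Fin n → Fin n → ℝ)
    (ψ : EuclideanSpace ℝ (Fin n) → ℝ) (lam c₀ c₁ : ℝ)
    (t : ℝ) (x : EuclideanSpace ℝ (Fin n)) : ℝ :=
  elltt8 lam c₁ ψ t x
    + ∑ j, ∑ k, partialDeriv8 (fun y => b y j k * partialDeriv8 (ell8 lam c₁ ψ t) j y) k x
    - c₀ * lam

/-- `𝒜 = ℓ_t² − ℓ_{tt} − Σ_{j,k}(b^{jk}ℓ_{x_j}ℓ_{x_k} − b^{jk}_{x_k}ℓ_{x_j}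
  − b^{jk}ℓ_{x_j x_k}) − Ψ`. -/
noncomputable def AA8 {n : ℕ} (b : EuclideanSpace ℝ (Fin n) → Fin n → Fin n → ℝ)
    (ψ : EuclideanSpace ℝ (Fin n) → ℝ) (lam c₀ c₁ : ℝ)
    (t : ℝ) (x : EuclideanSpace ℝ (Fin n)) : ℝ :=
  (ellt8 lam c₁ ψ t x) ^ 2 - elltt8 lam c₁ ψ t x
    - (∑ j, ∑ k,
        (b x j k * partialDeriv8 (ell8 lam c₁ ψ t) j x * partialDeriv8 (ell8 lam c₁ ψ t) k x
          - partialDeriv8 (fun y => b y j k) k x * partialDeriv8 (ell8 lam c₁ ψ t) j x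
          - b x j k * partialDeriv8 (fun y => partialDeriv8 (ell8 lam c₁ ψ t) j y) k x))
    - Psi8 b ψ lam c₀ c₁ t x

/-- `ℬ = 𝒜Ψ + ∂_t(𝒜ℓ_t) − Σ_{j,k}∂_{x_k}(𝒜 b^{jk} ℓ_{x_j})
  + (1/2)[∂_{tt}Ψ − Σ_{j,k}∂_{x_k}(b^{jk}Ψ_{x_j})]`. -/
noncomputable def BB8 {n : ℕ} (b : EuclideanSpace ℝ (Fin n) → Fin n → Fin n → ℝ)
    (ψ : EuclideanSpace ℝ (Fin n) → ℝ) (lam c₀ c₁ : ℝ)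
    (t : ℝ) (x : EuclideanSpace ℝ (Fin n)) : ℝ :=
  AA8 b ψ lam c₀ c₁ t x * Psi8 b ψ lam c₀ c₁ t x
    + deriv (fun s => AA8 b ψ lam c₀ c₁ s x * ellt8 lam c₁ ψ s x) t
    - (∑ j, ∑ k, partialDeriv8
        (fun y => AA8 b ψ lam c₀ c₁ t y * b y j k * partialDeriv8 (ell8 lam c₁ ψ t) j y) k x)
    + (1/2) * (deriv (fun s => deriv (fun τ => Psi8 b ψ lam c₀ c₁ τ x) s) t
        - ∑ j, ∑ k, partialDeriv8
            (fun y => b y j k * partialDeriv8 (fun y' => Psi8 b ψ lam c₀ c₁ t y') j y) k x)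

/-- Condition (B)(i): the pseudoconvexity inequality with constant `μ₀` on the set `S`. -/
def CondBi8 {n : ℕ} (b : EuclideanSpace ℝ (Fin n) → Fin n → Fin n → ℝ)
    (ψ : EuclideanSpace ℝ (Fin n) → ℝ) (μ₀ : ℝ) (S : Set (EuclideanSpace ℝ (Fin n))) : Prop :=
  ∀ x ∈ S, ∀ ξ : Fin n → ℝ,
    μ₀ * ∑ j, ∑ k, b x j k * ξ j * ξ k ≤
      ∑ j, ∑ k, (∑ j', ∑ k',
        (2 * b x j k' * partialDeriv8 (fun y => b y j' k * partialDeriv8 ψ j' y) k' x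
          - partialDeriv8 (fun y => b y j k) k' x * b x j' k' * partialDeriv8 ψ j' x))
        * ξ j * ξ k


noncomputable def Q8 {n : ℕ} (b : EuclideanSpace ℝ (Fin n) → Fin n → Fin n → ℝ)
    (ψ : EuclideanSpace ℝ (Fin n) → ℝ) (x : EuclideanSpace ℝ (Fin n)) : ℝ :=
  ∑ j, ∑ k, b x j k * partialDeriv8 ψ j x * partialDeriv8 ψ k x

noncomputable def L8 {n : ℕ} (b : EuclideanSpace ℝ (Fin n) → Fin n → Fin n → ℝ)
    (ψ : EuclideanSpace ℝ (Fin n) → ℝ) (x : EuclideanSpace ℝ (Fin n)) : ℝ :=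
  ∑ j, ∑ k, partialDeriv8 (fun y => b y j k * partialDeriv8 ψ j y) k x

noncomputable def E8 {n : ℕ} (b : EuclideanSpace ℝ (Fin n) → Fin n → Fin n → ℝ)
    (ψ : EuclideanSpace ℝ (Fin n) → ℝ) (x : EuclideanSpace ℝ (Fin n)) : ℝ :=
  ∑ j, ∑ k, b x j k * partialDeriv8 ψ j x * partialDeriv8 (Q8 b ψ) k x

noncomputable def D8 {n : ℕ} (b : EuclideanSpace ℝ (Fin n) → Fin n → Fin n → ℝ)
    (ψ : EuclideanSpace ℝ (Fin n) → ℝ) (x : EuclideanSpace ℝ (Fin n)) : ℝ :=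
  ∑ j, ∑ k, partialDeriv8 (fun y => b y j k * partialDeriv8 (L8 b ψ) j y) k x

namespace Stmt8


variable {n : ℕ} {f g ψ : EuclideanSpace ℝ (Fin n) → ℝ} {j k : Fin n}
  {x : EuclideanSpace ℝ (Fin n)} {lam c₀ c₁ t : ℝ}

lemma pd_const_mul (hf : DifferentiableAt ℝ f x) (c : ℝ) :
    partialDeriv8 (fun y => c * f y) j x = c * partialDeriv8 f j x := by
  unfold partialDeriv8
  rw [fderiv_const_mul hf]
  simp

lemma pd_mul (hf : DifferentiableAt ℝ f x) (hg : DifferentiableAt ℝ g x) :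
    partialDeriv8 (fun y => f y * g y) j x
      = partialDeriv8 f j x * g x + f x * partialDeriv8 g j x := by
  unfold partialDeriv8
  rw [fderiv_fun_mul hf hg]
  simp only [ContinuousLinearMap.add_apply, ContinuousLinearMap.smul_apply, smul_eq_mul]
  ring

lemma pd_sub_const (c : ℝ) :
    partialDeriv8 (fun y => f y - c) j x = partialDeriv8 f j x := by
  unfold partialDeriv8
  rw [fderiv_sub_const]

lemma pd_const_sub (hf : DifferentiableAt ℝ f x) (c : ℝ) :
    partialDeriv8 (fun y => c - f y) j x = -partialDeriv8 f j x := by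
  unfold partialDeriv8
  rw [fderiv_fun_sub (differentiableAt_const c) hf]
  simp

lemma pd_sum {ι : Type*} (s : Finset ι) (F : ι → EuclideanSpace ℝ (Fin n) → ℝ)
    (hF : ∀ i ∈ s, DifferentiableAt ℝ (F i) x) :
    partialDeriv8 (fun y => ∑ i ∈ s, F i y) j x = ∑ i ∈ s, partialDeriv8 (F i) j x := by
  unfold partialDeriv8
  rw [fderiv_fun_sum hF]
  simp

lemma contDiff_pd {m nn : ℕ} (hf : ContDiff ℝ nn f) (h : m + 1 ≤ nn) :
    ContDiff ℝ m (fun y => partialDeriv8 f j y) :=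
  (hf.fderiv_right (by exact_mod_cast h)).clm_apply contDiff_const

lemma ellt8_eq : ellt8 lam c₁ ψ t x = -(2 * lam * c₁ * t) := by
  unfold ellt8 ell8
  have h : HasDerivAt (fun s : ℝ => lam * (ψ x - c₁ * s ^ 2))
      (lam * -(c₁ * (↑2 * t ^ (2 - 1)))) t :=
    (((hasDerivAt_pow 2 t).const_mul c₁).const_sub (ψ x)).const_mul lam
  rw [h.deriv]
  push_cast
  ring

lemma elltt8_eq : elltt8 lam c₁ ψ t x = -(2 * lam * c₁) := by
  unfold elltt8
  have h1 : (fun s => ellt8 lam c₁ ψ s x) = fun s : ℝ => -(2 * lam * c₁) * s := by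
    funext s; rw [ellt8_eq]; ring
  rw [h1]
  have h : HasDerivAt (fun s : ℝ => -(2 * lam * c₁) * s) (-(2 * lam * c₁) * 1) t :=
    (hasDerivAt_id t).const_mul _
  rw [h.deriv]; ring

lemma pd_ell8 (hψ : Differentiable ℝ ψ) (y : EuclideanSpace ℝ (Fin n)) :
    partialDeriv8 (ell8 lam c₁ ψ t) j y = lam * partialDeriv8 ψ j y := by
  have h1 : ell8 lam c₁ ψ t = fun y => lam * (fun z => ψ z - c₁ * t ^ 2) y := rfl
  rw [h1, pd_const_mul ((hψ y).sub_const _), pd_sub_const]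



section Smooth

variable {b : EuclideanSpace ℝ (Fin n) → Fin n → Fin n → ℝ}
variable (hb : ∀ j k, ContDiff ℝ 3 (fun x => b x j k)) (hψ : ContDiff ℝ 4 ψ)
include hb hψ

lemma cψ3 : ContDiff ℝ 3 (fun y => partialDeriv8 ψ j y) := by
  exact contDiff_pd hψ (by norm_num)

lemma cg3 : ContDiff ℝ 3 (fun y => b y j k * partialDeriv8 ψ j y) :=
  (hb j k).mul (cψ3 hb hψ)

lemma cL2 : ContDiff ℝ 2 (L8 b ψ) := by
  unfold L8
  exact ContDiff.sum fun j _ => ContDiff.sum fun k _ => contDiff_pd (cg3 hb hψ) (by norm_num)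

lemma cQ3 : ContDiff ℝ 3 (Q8 b ψ) := by
  unfold Q8
  exact ContDiff.sum fun j _ => ContDiff.sum fun k _ => (cg3 hb hψ).mul (cψ3 hb hψ)

lemma cpdL1 : ContDiff ℝ 1 (fun y => partialDeriv8 (L8 b ψ) j y) :=
  contDiff_pd (cL2 hb hψ) (by norm_num)

lemma cpdQ2 : ContDiff ℝ 2 (fun y => partialDeriv8 (Q8 b ψ) j y) :=
  contDiff_pd (cQ3 hb hψ) (by norm_num)

lemma Psi8_eq : Psi8 b ψ lam c₀ c₁ t x = lam * L8 b ψ x - 2 * c₁ * lam - c₀ * lam := by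
  unfold Psi8
  rw [elltt8_eq]
  have hsum : ∀ j k : Fin n,
      partialDeriv8 (fun y => b y j k * partialDeriv8 (ell8 lam c₁ ψ t) j y) k x
        = lam * partialDeriv8 (fun y => b y j k * partialDeriv8 ψ j y) k x := by
    intro j k
    have h1 : (fun y => b y j k * partialDeriv8 (ell8 lam c₁ ψ t) j y)
        = fun y => lam * (b y j k * partialDeriv8 ψ j y) := by
      funext y
      rw [pd_ell8 (hψ.differentiable (by norm_num))]
      ring
    rw [h1, pd_const_mul ((cg3 hb hψ).differentiable (by norm_num)).differentiableAt]
  calc -(2 * lam * c₁)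
        + (∑ j, ∑ k, partialDeriv8 (fun y => b y j k * partialDeriv8 (ell8 lam c₁ ψ t) j y) k x)
        - c₀ * lam
      = -(2 * lam * c₁)
        + (∑ j, ∑ k, lam * partialDeriv8 (fun y => b y j k * partialDeriv8 ψ j y) k x)
        - c₀ * lam := by
        congr 2
        exact Finset.sum_congr rfl fun j _ => Finset.sum_congr rfl fun k _ => hsum j k
    _ = lam * L8 b ψ x - 2 * c₁ * lam - c₀ * lam := by
        simp only [← Finset.mul_sum, L8]
        ring

lemma AA8_eq : AA8 b ψ lam c₀ c₁ t x
    = lam ^ 2 * (4 * c₁ ^ 2 * t ^ 2 - Q8 b ψ x) + lam * (4 * c₁ + c₀) := by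
  have hψd : Differentiable ℝ ψ := hψ.differentiable (by norm_num)
  have hterm : ∀ j k : Fin n,
      (b x j k * partialDeriv8 (ell8 lam c₁ ψ t) j x * partialDeriv8 (ell8 lam c₁ ψ t) k x
        - partialDeriv8 (fun y => b y j k) k x * partialDeriv8 (ell8 lam c₁ ψ t) j x
        - b x j k * partialDeriv8 (fun y => partialDeriv8 (ell8 lam c₁ ψ t) j y) k x)
      = lam ^ 2 * (b x j k * partialDeriv8 ψ j x * partialDeriv8 ψ k x)
        - lam * partialDeriv8 (fun y => b y j k * partialDeriv8 ψ j y) k x := by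
    intro j k
    have h1 : (fun y => partialDeriv8 (ell8 lam c₁ ψ t) j y)
        = fun y => lam * partialDeriv8 ψ j y := funext fun y => pd_ell8 hψd y
    rw [h1, pd_const_mul ((cψ3 hb hψ).differentiable (by norm_num)).differentiableAt,
      pd_ell8 hψd, pd_ell8 hψd,
      pd_mul (((hb j k).differentiable (by norm_num)).differentiableAt)
        (((cψ3 hb hψ).differentiable (by norm_num)).differentiableAt)]
    ring
  unfold AA8
  rw [Psi8_eq hb hψ, ellt8_eq, elltt8_eq]
  rw [Finset.sum_congr rfl fun j _ => Finset.sum_congr rfl fun k _ => hterm j k]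
  simp only [Finset.sum_sub_distrib, ← Finset.mul_sum]
  rw [show (∑ j, ∑ k : Fin n, b x j k * partialDeriv8 ψ j x * partialDeriv8 ψ k x) = Q8 b ψ x from rfl,
    show (∑ j, ∑ k : Fin n, partialDeriv8 (fun y => b y j k * partialDeriv8 ψ j y) k x) = L8 b ψ x from rfl]
  ring

lemma term2_eq : deriv (fun s => AA8 b ψ lam c₀ c₁ s x * ellt8 lam c₁ ψ s x) t
    = lam ^ 2 * (4 * c₁ ^ 2 * (2 * t)) * (-(2 * lam * c₁) * t)
      + (lam ^ 2 * (4 * c₁ ^ 2 * t ^ 2 - Q8 b ψ x) + lam * (4 * c₁ + c₀)) * (-(2 * lam * c₁)) := by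
  have h1 : (fun s => AA8 b ψ lam c₀ c₁ s x * ellt8 lam c₁ ψ s x)
      = fun s : ℝ => (lam ^ 2 * (4 * c₁ ^ 2 * s ^ 2 - Q8 b ψ x) + lam * (4 * c₁ + c₀))
          * (-(2 * lam * c₁) * s) := by
    funext s
    rw [AA8_eq hb hψ, ellt8_eq]
    ring
  rw [h1]
  have ha : HasDerivAt (fun s : ℝ => lam ^ 2 * (4 * c₁ ^ 2 * s ^ 2 - Q8 b ψ x) + lam * (4 * c₁ + c₀))
      (lam ^ 2 * (4 * c₁ ^ 2 * (2 * t))) t := by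
    have : HasDerivAt (fun s : ℝ => s ^ 2) ((2 : ℕ) * t ^ (2 - 1)) t := hasDerivAt_pow 2 t
    have h2 := (((this.const_mul (4 * c₁ ^ 2)).sub_const (Q8 b ψ x)).const_mul
      (lam ^ 2)).add_const (lam * (4 * c₁ + c₀))
    refine h2.congr_deriv ?_
    push_cast
    ring
  have hbd : HasDerivAt (fun s : ℝ => -(2 * lam * c₁) * s) (-(2 * lam * c₁)) t := by
    simpa using (hasDerivAt_id t).const_mul (-(2 * lam * c₁))
  exact (ha.mul hbd).deriv

lemma term3_eq : (∑ j, ∑ k, partialDeriv8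
      (fun y => AA8 b ψ lam c₀ c₁ t y * b y j k * partialDeriv8 (ell8 lam c₁ ψ t) j y) k x)
    = -(lam ^ 3 * E8 b ψ x)
      + (lam ^ 2 * (4 * c₁ ^ 2 * t ^ 2 - Q8 b ψ x) + lam * (4 * c₁ + c₀)) * (lam * L8 b ψ x) := by
  have hψd : Differentiable ℝ ψ := hψ.differentiable (by norm_num)
  have hQd : Differentiable ℝ (Q8 b ψ) := (cQ3 hb hψ).differentiable (by norm_num)
  have hgd : ∀ j k : Fin n, Differentiable ℝ (fun y => b y j k * partialDeriv8 ψ j y) :=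
    fun j k => (cg3 hb hψ).differentiable (by norm_num)
  have hterm : ∀ j k : Fin n, partialDeriv8
      (fun y => AA8 b ψ lam c₀ c₁ t y * b y j k * partialDeriv8 (ell8 lam c₁ ψ t) j y) k x
      = (-(lam ^ 3)) * (b x j k * partialDeriv8 ψ j x * partialDeriv8 (Q8 b ψ) k x)
        + ((lam ^ 2 * (4 * c₁ ^ 2 * t ^ 2 - Q8 b ψ x) + lam * (4 * c₁ + c₀)) * lam)
          * partialDeriv8 (fun y => b y j k * partialDeriv8 ψ j y) k x := by
    intro j k
    have h1 : (fun y => AA8 b ψ lam c₀ c₁ t y * b y j k * partialDeriv8 (ell8 lam c₁ ψ t) j y)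
        = fun y => ((lam ^ 2 * (4 * c₁ ^ 2 * t ^ 2) + lam * (4 * c₁ + c₀)) - lam ^ 2 * Q8 b ψ y)
            * (lam * (b y j k * partialDeriv8 ψ j y)) := by
      funext y
      rw [AA8_eq hb hψ, pd_ell8 hψd]
      ring
    rw [h1, pd_mul (by
        exact (differentiableAt_const _).sub (((hQd x).const_mul (lam ^ 2)))) (by
        exact ((hgd j k) x).const_mul lam)]
    rw [pd_const_sub ((hQd x).const_mul (lam ^ 2)) _, pd_const_mul (hQd x) (lam ^ 2),
      pd_const_mul ((hgd j k) x) lam]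
    ring
  rw [Finset.sum_congr rfl fun j _ => Finset.sum_congr rfl fun k _ => hterm j k]
  simp only [Finset.sum_add_distrib, ← Finset.mul_sum]
  unfold E8 L8
  ring

lemma term4t_eq : deriv (fun s => deriv (fun τ => Psi8 b ψ lam c₀ c₁ τ x) s) t = 0 := by
  have h1 : (fun τ : ℝ => Psi8 b ψ lam c₀ c₁ τ x)
      = fun _ : ℝ => lam * L8 b ψ x - 2 * c₁ * lam - c₀ * lam := by
    funext τ; exact Psi8_eq hb hψ
  rw [h1]
  simp

lemma term4x_eq : (∑ j, ∑ k, partialDeriv8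
      (fun y => b y j k * partialDeriv8 (fun y' => Psi8 b ψ lam c₀ c₁ t y') j y) k x)
    = lam * D8 b ψ x := by
  have hLd : Differentiable ℝ (L8 b ψ) := (cL2 hb hψ).differentiable (by norm_num)
  have hterm : ∀ j k : Fin n, partialDeriv8
      (fun y => b y j k * partialDeriv8 (fun y' => Psi8 b ψ lam c₀ c₁ t y') j y) k x
      = lam * partialDeriv8 (fun y => b y j k * partialDeriv8 (L8 b ψ) j y) k x := by
    intro j k
    have h1 : (fun y' => Psi8 b ψ lam c₀ c₁ t y')
        = fun y' => lam * L8 b ψ y' - (2 * c₁ * lam + c₀ * lam) := by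
      funext y'; rw [Psi8_eq hb hψ]; ring
    have h2 : (fun y => b y j k * partialDeriv8 (fun y' => Psi8 b ψ lam c₀ c₁ t y') j y)
        = fun y => lam * (b y j k * partialDeriv8 (L8 b ψ) j y) := by
      funext y
      rw [h1, pd_sub_const, pd_const_mul (hLd y)]
      ring
    rw [h2, pd_const_mul ?_]
    exact (((hb j k).differentiable (by norm_num)) x).mul
      (((cpdL1 hb hψ).differentiable (by norm_num)) x)
  rw [Finset.sum_congr rfl fun j _ => Finset.sum_congr rfl fun k _ => hterm j k]
  simp only [← Finset.mul_sum, D8]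

lemma BB8_eq : BB8 b ψ lam c₀ c₁ t x
    = lam ^ 3 * ((4 * c₁ + c₀) * Q8 b ψ x
        - (4 * (4 * c₁ + c₀) * c₁ ^ 2 + 16 * c₁ ^ 3) * t ^ 2 + E8 b ψ x)
      - lam ^ 2 * (4 * c₁ + c₀) ^ 2 - (lam / 2) * D8 b ψ x := by
  unfold BB8
  rw [AA8_eq hb hψ, Psi8_eq hb hψ, term2_eq hb hψ, term3_eq hb hψ, term4t_eq hb hψ,
    term4x_eq hb hψ]
  ring

end Smooth

section Sum4

variable {α : Type*} [Fintype α]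

lemma sum4_pack (f : α → α → α → α → ℝ) :
    (∑ j, ∑ k, ∑ j', ∑ k', f j k j' k')
      = ∑ p : α × α × α × α, f p.1 p.2.1 p.2.2.1 p.2.2.2 := by
  rw [Fintype.sum_prod_type]
  exact Finset.sum_congr rfl fun j _ => by
    rw [Fintype.sum_prod_type]
    exact Finset.sum_congr rfl fun k _ => by
      rw [Fintype.sum_prod_type]

/-- swap positions 2 and 4 -/
lemma sum4_swapA (f : α → α → α → α → ℝ) :
    (∑ j, ∑ k, ∑ j', ∑ k', f j k j' k') = ∑ j, ∑ k, ∑ j', ∑ k', f j k' j' k := by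
  rw [sum4_pack, sum4_pack]
  exact Fintype.sum_bijective (fun p : α × α × α × α => (p.1, p.2.2.2, p.2.2.1, p.2.1))
    (Function.Involutive.bijective fun p => rfl) _ _ (fun p => rfl)

/-- swap positions 3 and 4 -/
lemma sum4_swapB (f : α → α → α → α → ℝ) :
    (∑ j, ∑ k, ∑ j', ∑ k', f j k j' k') = ∑ j, ∑ k, ∑ j', ∑ k', f j k k' j' := by
  rw [sum4_pack, sum4_pack]
  exact Fintype.sum_bijective (fun p : α × α × α × α => (p.1, p.2.1, p.2.2.2, p.2.2.1))
    (Function.Involutive.bijective fun p => rfl) _ _ (fun p => rfl)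

/-- swap (1,2) with (3,4) -/
lemma sum4_swapC (f : α → α → α → α → ℝ) :
    (∑ j, ∑ k, ∑ j', ∑ k', f j k j' k') = ∑ j, ∑ k, ∑ j', ∑ k', f j' k' j k := by
  rw [sum4_pack, sum4_pack]
  exact Fintype.sum_bijective (fun p : α × α × α × α => (p.2.2.1, p.2.2.2, p.1, p.2.1))
    (Function.Involutive.bijective fun p => rfl) _ _ (fun p => rfl)

end Sum4

section Ident

variable {b : EuclideanSpace ℝ (Fin n) → Fin n → Fin n → ℝ}
variable (hb : ∀ j k, ContDiff ℝ 3 (fun x => b x j k)) (hψ : ContDiff ℝ 4 ψ)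
  (hbsymm : ∀ x j k, b x j k = b x k j)
include hb hψ

lemma pdQ8_eq : partialDeriv8 (Q8 b ψ) k x
    = ∑ j', ∑ k', (partialDeriv8 (fun y => b y j' k') k x
          * partialDeriv8 ψ j' x * partialDeriv8 ψ k' x
        + b x j' k' * partialDeriv8 (fun y => partialDeriv8 ψ j' y) k x * partialDeriv8 ψ k' x
        + b x j' k' * partialDeriv8 ψ j' x * partialDeriv8 (fun y => partialDeriv8 ψ k' y) k x) := by
  have hbd : ∀ j k : Fin n, DifferentiableAt ℝ (fun y => b y j k) x :=
    fun j k => (((hb j k).differentiable (by norm_num)) x)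
  have hpd : ∀ j : Fin n, DifferentiableAt ℝ (fun y => partialDeriv8 ψ j y) x :=
    fun j => (((cψ3 hb hψ).differentiable (by norm_num)) x)
  have h1 : Q8 b ψ = fun y => ∑ p : Fin n × Fin n,
      (fun q : Fin n × Fin n => fun y => b y q.1 q.2 * partialDeriv8 ψ q.1 y
          * partialDeriv8 ψ q.2 y) p y := by
    funext y
    rw [Fintype.sum_prod_type]
    rfl
  rw [h1, pd_sum _ _ (fun p _ => ((hbd p.1 p.2).mul (hpd p.1)).mul (hpd p.2))]
  rw [Fintype.sum_prod_type]
  refine Finset.sum_congr rfl fun j' _ => Finset.sum_congr rfl fun k' _ => ?_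
  rw [pd_mul ((hbd j' k').fun_mul (hpd j')) (hpd k'), pd_mul (hbd j' k') (hpd j')]
  ring

lemma E8_eq_cond (x : EuclideanSpace ℝ (Fin n)) (hbs : ∀ x j k, b x j k = b x k j) :
    E8 b ψ x = ∑ j, ∑ k, (∑ j', ∑ k',
        (2 * b x j k' * partialDeriv8 (fun y => b y j' k * partialDeriv8 ψ j' y) k' x
          - partialDeriv8 (fun y => b y j k) k' x * b x j' k' * partialDeriv8 ψ j' x))
        * partialDeriv8 ψ j x * partialDeriv8 ψ k x := by
  have hbd : ∀ j k : Fin n, DifferentiableAt ℝ (fun y => b y j k) x :=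
    fun j k => (((hb j k).differentiable (by norm_num)) x)
  have hpd : ∀ j : Fin n, DifferentiableAt ℝ (fun y => partialDeriv8 ψ j y) x :=
    fun j => (((cψ3 hb hψ).differentiable (by norm_num)) x)
  set ξ : Fin n → ℝ := fun j => partialDeriv8 ψ j x with hξ
  set B : Fin n → Fin n → ℝ := fun j k => b x j k with hB
  set β : Fin n → Fin n → Fin n → ℝ := fun j k d => partialDeriv8 (fun y => b y j k) d x with hβ
  set H : Fin n → Fin n → ℝ := fun a d => partialDeriv8 (fun y => partialDeriv8 ψ a y) d x with hH
  -- expand LHS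
  have hL : E8 b ψ x = ∑ j, ∑ k, ∑ j', ∑ k',
      (B j k * ξ j * (β j' k' k * ξ j' * ξ k')
        + B j k * ξ j * (B j' k' * H j' k * ξ k')
        + B j k * ξ j * (B j' k' * ξ j' * H k' k)) := by
    unfold E8
    refine Finset.sum_congr rfl fun j _ => Finset.sum_congr rfl fun k _ => ?_
    rw [pdQ8_eq hb hψ]
    rw [Finset.mul_sum]
    refine Finset.sum_congr rfl fun j' _ => ?_
    rw [Finset.mul_sum]
    refine Finset.sum_congr rfl fun k' _ => ?_
    ring
  -- expand RHS
  have hR : (∑ j, ∑ k, (∑ j', ∑ k',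
        (2 * b x j k' * partialDeriv8 (fun y => b y j' k * partialDeriv8 ψ j' y) k' x
          - partialDeriv8 (fun y => b y j k) k' x * b x j' k' * partialDeriv8 ψ j' x))
        * partialDeriv8 ψ j x * partialDeriv8 ψ k x)
      = ∑ j, ∑ k, ∑ j', ∑ k',
        (2 * (B j k' * (β j' k k' * ξ j' * ξ j * ξ k))
          + 2 * (B j k' * (B j' k * H j' k' * ξ j * ξ k))
          - β j k k' * B j' k' * ξ j' * ξ j * ξ k) := by
    refine Finset.sum_congr rfl fun j _ => Finset.sum_congr rfl fun k _ => ?_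
    rw [Finset.sum_mul, Finset.sum_mul]
    refine Finset.sum_congr rfl fun j' _ => ?_
    rw [Finset.sum_mul, Finset.sum_mul]
    refine Finset.sum_congr rfl fun k' _ => ?_
    rw [pd_mul (hbd j' k) (hpd j')]
    ring
  rw [hL, hR]
  -- split both sides into monomial quadruple sums
  simp only [Finset.sum_add_distrib, Finset.sum_sub_distrib]
  have e32 : (∑ j, ∑ k, ∑ j', ∑ k', B j k * ξ j * (B j' k' * ξ j' * H k' k))
      = ∑ j, ∑ k, ∑ j', ∑ k', B j k * ξ j * (B j' k' * H j' k * ξ k') := by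
    rw [sum4_swapB (fun j k j' k' => B j k * ξ j * (B j' k' * ξ j' * H k' k))]
    refine Finset.sum_congr rfl fun j _ => Finset.sum_congr rfl fun k _ =>
      Finset.sum_congr rfl fun j' _ => Finset.sum_congr rfl fun k' _ => ?_
    have hsym : B k' j' = B j' k' := hbs x k' j'
    show B j k * ξ j * (B k' j' * ξ k' * H j' k) = _
    rw [hsym]
    ring
  have h1 : (∑ j, ∑ k, ∑ j', ∑ k', 2 * (B j k' * (β j' k k' * ξ j' * ξ j * ξ k)))
      = 2 * ∑ j, ∑ k, ∑ j', ∑ k', B j k * ξ j * (β j' k' k * ξ j' * ξ k') := by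
    rw [sum4_swapA (fun j k j' k' => 2 * (B j k' * (β j' k k' * ξ j' * ξ j * ξ k)))]
    simp only [Finset.mul_sum]
    refine Finset.sum_congr rfl fun j _ => Finset.sum_congr rfl fun k _ =>
      Finset.sum_congr rfl fun j' _ => Finset.sum_congr rfl fun k' _ => ?_
    show 2 * (B j k * (β j' k' k * ξ j' * ξ j * ξ k')) = _
    ring
  have h2 : (∑ j, ∑ k, ∑ j', ∑ k', 2 * (B j k' * (B j' k * H j' k' * ξ j * ξ k)))
      = 2 * ∑ j, ∑ k, ∑ j', ∑ k', B j k * ξ j * (B j' k' * H j' k * ξ k') := by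
    rw [sum4_swapA (fun j k j' k' => 2 * (B j k' * (B j' k * H j' k' * ξ j * ξ k)))]
    simp only [Finset.mul_sum]
    refine Finset.sum_congr rfl fun j _ => Finset.sum_congr rfl fun k _ =>
      Finset.sum_congr rfl fun j' _ => Finset.sum_congr rfl fun k' _ => ?_
    show 2 * (B j k * (B j' k' * H j' k * ξ j * ξ k')) = _
    ring
  have h3 : (∑ j, ∑ k, ∑ j', ∑ k', β j k k' * B j' k' * ξ j' * ξ j * ξ k)
      = ∑ j, ∑ k, ∑ j', ∑ k', B j k * ξ j * (β j' k' k * ξ j' * ξ k') := by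
    rw [sum4_swapC (fun j k j' k' => β j k k' * B j' k' * ξ j' * ξ j * ξ k)]
    refine Finset.sum_congr rfl fun j _ => Finset.sum_congr rfl fun k _ =>
      Finset.sum_congr rfl fun j' _ => Finset.sum_congr rfl fun k' _ => ?_
    show β j' k' k * B j k * ξ j * ξ j' * ξ k' = _
    ring
  rw [e32, h1, h2, h3]
  ring

end Ident

end Stmt8

/-- under Condition (B)(i) and the strengthened Condition
(`(1/4)Σ b^{jk}ψ_{x_j}ψ_{x_k} ≥ R₁² := max_{closure G} ψ`, `c₁ < R₁/(√2 T)`,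
`μ₀ − 4c₁ − c₀ > 0`), there are `C > 0` and `λ₁ > 0` such that `ℬ ≥ Cλ³` on
`[0,T] × closure G` for all `λ ≥ λ₁`. -/
theorem stmt_8 {n : ℕ} (G : Set (EuclideanSpace ℝ (Fin n)))
    (hGopen : IsOpen G) (hGconn : IsConnected G) (hGbdd : Bornology.IsBounded G)
    (b : EuclideanSpace ℝ (Fin n) → Fin n → Fin n → ℝ)
    (hbC3 : ∀ j k, ContDiff ℝ 3 (fun x => b x j k))
    (hbsymm : ∀ x j k, b x j k = b x k j)
    (T : ℝ) (hT : 0 < T)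
    (ψ : EuclideanSpace ℝ (Fin n) → ℝ) (hψC4 : ContDiff ℝ 4 ψ)
    (hψpos : ∀ x ∈ closure G, 0 < ψ x)
    (μ₀ : ℝ) (hμ₀ : 0 < μ₀) (hB1 : CondBi8 b ψ μ₀ (closure G))
    (c₀ c₁ : ℝ) (hc₀ : 0 < c₀) (hc₁ : 0 < c₁)
    (hR : ∀ x ∈ closure G,
      sSup (ψ '' closure G) ≤
        (1/4) * ∑ j, ∑ k, b x j k * partialDeriv8 ψ j x * partialDeriv8 ψ k x)
    (hc₁T : c₁ < Real.sqrt (sSup (ψ '' closure G)) / (Real.sqrt 2 * T))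
    (hμc : 0 < μ₀ - 4 * c₁ - c₀) :
    ∃ C > (0:ℝ), ∃ lam₁ > (0:ℝ), ∀ lam : ℝ, lam₁ ≤ lam →
      ∀ t ∈ Set.Icc (0:ℝ) T, ∀ x ∈ closure G,
        C * lam ^ 3 ≤ BB8 b ψ lam c₀ c₁ t x := by
  classical
  have hK : IsCompact (closure G) :=
    Metric.isCompact_of_isClosed_isBounded isClosed_closure hGbdd.closure
  set M : ℝ := sSup (ψ '' closure G) with hM
  obtain ⟨x₀, hx₀G⟩ := hGconn.nonempty
  have hx₀ : x₀ ∈ closure G := subset_closure hx₀G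
  have hbdd : BddAbove (ψ '' closure G) :=
    (hK.image hψC4.continuous).bddAbove
  have hMge : ∀ x ∈ closure G, ψ x ≤ M := fun x hx => le_csSup hbdd ⟨x, hx, rfl⟩
  have hMpos : 0 < M := lt_of_lt_of_le (hψpos x₀ hx₀) (hMge x₀ hx₀)
  -- 2 c₁² T² < M
  have h2cT : 2 * c₁ ^ 2 * T ^ 2 < M := by
    have hs2T : 0 < Real.sqrt 2 * T := by positivity
    have h1 : c₁ * (Real.sqrt 2 * T) < Real.sqrt M := (lt_div_iff₀ hs2T).mp hc₁T
    have h2 : (c₁ * (Real.sqrt 2 * T)) ^ 2 < Real.sqrt M ^ 2 := by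
      have hc1nn : 0 ≤ c₁ * (Real.sqrt 2 * T) := by positivity
      exact pow_lt_pow_left₀ h1 hc1nn (by norm_num)
    rw [Real.sq_sqrt hMpos.le] at h2
    calc 2 * c₁ ^ 2 * T ^ 2 = (c₁ * (Real.sqrt 2 * T)) ^ 2 := by
          rw [mul_pow, mul_pow, Real.sq_sqrt (by norm_num : (0:ℝ) ≤ 2)]; ring
      _ < M := h2
  -- Q8 lower bound
  have hQge : ∀ x ∈ closure G, 4 * M ≤ Q8 b ψ x := by
    intro x hx
    have := hR x hx
    rw [hM]
    unfold Q8
    linarith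
  -- E8 lower bound
  have hEge : ∀ x ∈ closure G, μ₀ * Q8 b ψ x ≤ E8 b ψ x := by
    intro x hx
    have hcond := hB1 x hx (fun j => partialDeriv8 ψ j x)
    rw [Stmt8.E8_eq_cond hbC3 hψC4 x hbsymm]
    exact hcond
  -- κ
  obtain ⟨κ, hκ⟩ : ∃ v : ℝ, v = 4 * M * (μ₀ + 4 * c₁ + c₀)
      - 4 * c₁ ^ 2 * (8 * c₁ + c₀) * T ^ 2 := ⟨_, rfl⟩
  have hκpos : 0 < κ := by
    have h1 : (8 * c₁ + c₀) * (2 * c₁ ^ 2 * T ^ 2) < (8 * c₁ + c₀) * M :=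
      mul_lt_mul_of_pos_left h2cT (by positivity)
    rw [hκ]; nlinarith [hMpos, hμ₀, hc₀, hc₁]
  -- bound for D8 on closure G
  have hDcont : Continuous (D8 b ψ) := by
    unfold D8
    refine continuous_finset_sum _ fun j _ => continuous_finset_sum _ fun k _ => ?_
    have : ContDiff ℝ 0 (fun y => partialDeriv8
        (fun y => b y j k * partialDeriv8 (L8 b ψ) j y) k y) :=
      Stmt8.contDiff_pd (((hbC3 j k).of_le (by norm_num)).mul
        (Stmt8.cpdL1 hbC3 hψC4)) (by norm_num)
    exact this.continuous
  obtain ⟨KD, hKD⟩ := hK.exists_bound_of_continuousOn hDcont.continuousOn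
  obtain ⟨K, hKdef⟩ : ∃ v : ℝ, v = (4 * c₁ + c₀) ^ 2 + (max KD 0) / 2 := ⟨_, rfl⟩
  have hKnn : 0 ≤ K := by rw [hKdef]; positivity
  refine ⟨κ / 2, by positivity, max 1 (2 * K / κ), lt_of_lt_of_le one_pos (le_max_left _ _), ?_⟩
  intro lam hlam t ht x hx
  have hlam1 : (1:ℝ) ≤ lam := le_trans (le_max_left _ _) hlam
  have hlamK : 2 * K / κ ≤ lam := le_trans (le_max_right _ _) hlam
  have hlampos : 0 < lam := lt_of_lt_of_le one_pos hlam1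
  rw [Stmt8.BB8_eq hbC3 hψC4]
  -- F lower bound
  have ht2 : t ^ 2 ≤ T ^ 2 := by
    rcases ht with ⟨ht0, htT⟩
    exact pow_le_pow_left₀ ht0 htT 2
  have hQ := hQge x hx
  have hE := hEge x hx
  have hF : κ ≤ (4 * c₁ + c₀) * Q8 b ψ x
      - (4 * (4 * c₁ + c₀) * c₁ ^ 2 + 16 * c₁ ^ 3) * t ^ 2 + E8 b ψ x := by
    have hco : (0:ℝ) ≤ 4 * (4 * c₁ + c₀) * c₁ ^ 2 + 16 * c₁ ^ 3 := by positivity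
    have h1 : (4 * (4 * c₁ + c₀) * c₁ ^ 2 + 16 * c₁ ^ 3) * t ^ 2
        ≤ (4 * (4 * c₁ + c₀) * c₁ ^ 2 + 16 * c₁ ^ 3) * T ^ 2 :=
      mul_le_mul_of_nonneg_left ht2 hco
    have h2 : μ₀ * (4 * M) ≤ μ₀ * Q8 b ψ x := mul_le_mul_of_nonneg_left hQ hμ₀.le
    have h3 : (4 * c₁ + c₀) * (4 * M) ≤ (4 * c₁ + c₀) * Q8 b ψ x :=
      mul_le_mul_of_nonneg_left hQ (by positivity)
    rw [hκ]; nlinarith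
  -- D8 bound
  have hD : D8 b ψ x ≤ max KD 0 := by
    have := hKD x hx
    rw [Real.norm_eq_abs] at this
    exact le_trans (le_abs_self _) (le_trans this (le_max_left _ _))
  have hDK : (lam / 2) * D8 b ψ x ≤ (lam ^ 2 / 2) * max KD 0 := by
    have h0 : 0 ≤ max KD 0 := le_max_right _ _
    have h1 : lam * D8 b ψ x ≤ lam * max KD 0 := mul_le_mul_of_nonneg_left hD hlampos.le
    have h2 : lam * max KD 0 ≤ lam ^ 2 * max KD 0 :=
      mul_le_mul_of_nonneg_right (by nlinarith) h0
    nlinarith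
  -- assemble
  have hlamκ : 2 * K ≤ lam * κ := by
    rw [div_le_iff₀ hκpos] at hlamK
    linarith
  have hFlam : lam ^ 3 * κ ≤ lam ^ 3 * ((4 * c₁ + c₀) * Q8 b ψ x
      - (4 * (4 * c₁ + c₀) * c₁ ^ 2 + 16 * c₁ ^ 3) * t ^ 2 + E8 b ψ x) :=
    mul_le_mul_of_nonneg_left hF (by positivity)
  have hKlam : lam ^ 2 * K ≤ lam ^ 3 * (κ / 2) := by
    have := mul_le_mul_of_nonneg_left hlamκ (by positivity : (0:ℝ) ≤ lam ^ 2 / 2)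
    calc lam ^ 2 * K = lam ^ 2 / 2 * (2 * K) := by ring
      _ ≤ lam ^ 2 / 2 * (lam * κ) := mul_le_mul_of_nonneg_left hlamκ (by positivity)
      _ = lam ^ 3 * (κ / 2) := by ring
  calc κ / 2 * lam ^ 3 = lam ^ 3 * κ - lam ^ 3 * (κ / 2) := by ring
    _ ≤ lam ^ 3 * ((4 * c₁ + c₀) * Q8 b ψ x
        - (4 * (4 * c₁ + c₀) * c₁ ^ 2 + 16 * c₁ ^ 3) * t ^ 2 + E8 b ψ x)
        - (lam ^ 2 * (4 * c₁ + c₀) ^ 2 + (lam ^ 2 / 2) * max KD 0) := by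
        have : lam ^ 2 * (4 * c₁ + c₀) ^ 2 + (lam ^ 2 / 2) * max KD 0 = lam ^ 2 * K := by
          rw [hKdef]; ring
        rw [this]
        linarith
    _ ≤ lam ^ 3 * ((4 * c₁ + c₀) * Q8 b ψ x
        - (4 * (4 * c₁ + c₀) * c₁ ^ 2 + 16 * c₁ ^ 3) * t ^ 2 + E8 b ψ x)
        - lam ^ 2 * (4 * c₁ + c₀) ^ 2 - (lam / 2) * D8 b ψ x := by
        linarith
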